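/- Given six data (ū_{i-1}, ū_i, ū_{i+1}, v̄_{i-1}, v̄_i, v̄_{i+1}), there exists a unique polynomial p of degree at most 5 on a uniform three-cell stencil such that (1/Δx)∫_{I_{i+j}} p dx = ū_{i+j} and (1/Δx)∫_{I_{i+j}} p(x)(x−x_{i+j})/Δx dx = v̄_{i+j} for j = −1, 0, 1. -/

import Mathlib

open intervalIntegral Polynomial MeasureTheory

noncomputable def pc (xi d c0 c1 c2 c3 c4 c5 : ℝ) : Polynomial ℝ :=
  C c0 + C c1 * ((X - C xi) * C d) + C c2 * ((X - C xi) * C d)^2 + C c3 * ((X - C xi) * C d)^3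
    + C c4 * ((X - C xi) * C d)^4 + C c5 * ((X - C xi) * C d)^5

lemma pc_degree (xi d c0 c1 c2 c3 c4 c5 : ℝ) : (pc xi d c0 c1 c2 c3 c4 c5).degree ≤ 5 := by
  unfold pc; compute_degree

lemma pc_eval (xi d c0 c1 c2 c3 c4 c5 x : ℝ) :
    (pc xi d c0 c1 c2 c3 c4 c5).eval x
    = c0 + c1*((x - xi)*d) + c2*((x - xi)*d)^2 + c3*((x - xi)*d)^3 + c4*((x - xi)*d)^4
      + c5*((x - xi)*d)^5 := by
  simp [pc]

lemma rep (xi Δx : ℝ) (h : Δx ≠ 0) (q : Polynomial ℝ) (hq : q.degree ≤ 5) :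
    ∃ b0 b1 b2 b3 b4 b5 : ℝ, q = pc xi Δx⁻¹ b0 b1 b2 b3 b4 b5 := by
  set r := q.comp (C Δx * X + C xi) with hr_def
  have hu1 : (C Δx * X + C xi : Polynomial ℝ).natDegree ≤ 1 := by compute_degree
  have hr : r.natDegree ≤ 5 := by
    refine le_trans (natDegree_comp_le) ?_
    calc q.natDegree * (C Δx * X + C xi).natDegree ≤ 5 * 1 :=
      Nat.mul_le_mul (natDegree_le_iff_degree_le.mpr hq) hu1
    _ = 5 := by norm_num
  refine ⟨r.coeff 0, r.coeff 1, r.coeff 2, r.coeff 3, r.coeff 4, r.coeff 5, ?_⟩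
  have hcomp : (C Δx * X + C xi).comp ((X - C xi) * C Δx⁻¹) = X := by
    simp only [add_comp, mul_comp, C_comp, X_comp]
    rw [show C Δx * ((X - C xi) * C Δx⁻¹) = C Δx * C Δx⁻¹ * (X - C xi) by ring,
        ← C_mul, mul_inv_cancel₀ h]
    simp
  have hq2 : q = r.comp ((X - C xi) * C Δx⁻¹) := by
    rw [hr_def, Polynomial.comp_assoc, hcomp, comp_X]
  rw [hq2]
  conv_lhs => rw [Polynomial.as_sum_range' r 6 (lt_of_le_of_lt hr (by norm_num))]
  simp only [Finset.sum_range_succ, Finset.sum_range_zero, zero_add, add_comp, monomial_comp]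
  unfold pc; ring

lemma intpoly (a b d0 d1 d2 d3 d4 d5 d6 : ℝ) :
    ∫ x in a..b, (d0*x^0 + d1*x^1 + d2*x^2 + d3*x^3 + d4*x^4 + d5*x^5 + d6*x^6)
    = d0*(b-a) + d1*(b^2-a^2)/2 + d2*(b^3-a^3)/3 + d3*(b^4-a^4)/4 + d4*(b^5-a^5)/5
      + d5*(b^6-a^6)/6 + d6*(b^7-a^7)/7 := by
  have I : ∀ (c:ℝ) (k:ℕ), IntervalIntegrable (fun x:ℝ => c * x^k) volume a b :=
    fun c k => (Continuous.intervalIntegrable (by fun_prop) a b)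
  rw [integral_add ((((((I d0 0).add (I d1 1)).add (I d2 2)).add (I d3 3)).add (I d4 4)).add (I d5 5)) (I d6 6),
      integral_add (((((I d0 0).add (I d1 1)).add (I d2 2)).add (I d3 3)).add (I d4 4)) (I d5 5),
      integral_add ((((I d0 0).add (I d1 1)).add (I d2 2)).add (I d3 3)) (I d4 4),
      integral_add (((I d0 0).add (I d1 1)).add (I d2 2)) (I d3 3),
      integral_add ((I d0 0).add (I d1 1)) (I d2 2),
      integral_add (I d0 0) (I d1 1)]
  simp only [intervalIntegral.integral_const_mul, integral_pow, integral_id]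
  ring

lemma keyT (xi Δx a b e0 e1 e2 e3 e4 e5 e6 : ℝ) (h : Δx ≠ 0) :
    (∫ x in (xi + a*Δx)..(xi + b*Δx),
      (e0*(x/Δx - xi/Δx)^0 + e1*(x/Δx - xi/Δx)^1 + e2*(x/Δx - xi/Δx)^2 + e3*(x/Δx - xi/Δx)^3
        + e4*(x/Δx - xi/Δx)^4 + e5*(x/Δx - xi/Δx)^5 + e6*(x/Δx - xi/Δx)^6))
    = Δx * (e0*(b-a) + e1*(b^2-a^2)/2 + e2*(b^3-a^3)/3 + e3*(b^4-a^4)/4 + e4*(b^5-a^5)/5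
      + e5*(b^6-a^6)/6 + e6*(b^7-a^7)/7) := by
  have := integral_comp_div_sub (a := xi + a*Δx) (b := xi + b*Δx)
    (fun t : ℝ => e0*t^0 + e1*t^1 + e2*t^2 + e3*t^3 + e4*t^4 + e5*t^5 + e6*t^6) h (xi/Δx)
  rw [this, show (xi + a*Δx)/Δx - xi/Δx = a by field_simp; ring,
      show (xi + b*Δx)/Δx - xi/Δx = b by field_simp; ring, intpoly, smul_eq_mul]

lemma momU (xi Δx a b c0 c1 c2 c3 c4 c5 : ℝ) (h : Δx ≠ 0) :
    (∫ x in (xi + a*Δx)..(xi + b*Δx), (pc xi Δx⁻¹ c0 c1 c2 c3 c4 c5).eval x)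
    = Δx * (c0*(b-a) + c1*(b^2-a^2)/2 + c2*(b^3-a^3)/3 + c3*(b^4-a^4)/4 + c4*(b^5-a^5)/5
      + c5*(b^6-a^6)/6 + 0*(b^7-a^7)/7) := by
  rw [← keyT xi Δx a b c0 c1 c2 c3 c4 c5 0 h]
  refine integral_congr fun x _ => ?_
  rw [pc_eval]
  field_simp
  ring

lemma momW (xi Δx a b s c0 c1 c2 c3 c4 c5 : ℝ) (h : Δx ≠ 0) :
    (∫ x in (xi + a*Δx)..(xi + b*Δx),
      (pc xi Δx⁻¹ c0 c1 c2 c3 c4 c5).eval x * ((x - (xi + s*Δx))/Δx))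
    = Δx * ((-s*c0)*(b-a) + (c0-s*c1)*(b^2-a^2)/2 + (c1-s*c2)*(b^3-a^3)/3 + (c2-s*c3)*(b^4-a^4)/4
      + (c3-s*c4)*(b^5-a^5)/5 + (c4-s*c5)*(b^6-a^6)/6 + c5*(b^7-a^7)/7) := by
  rw [← keyT xi Δx a b (-s*c0) (c0-s*c1) (c1-s*c2) (c2-s*c3) (c3-s*c4) (c4-s*c5) c5 h]
  refine integral_congr fun x _ => ?_
  rw [pc_eval]
  field_simp
  ring

lemma mo1 (xi Δx c0 c1 c2 c3 c4 c5 : ℝ) (h : Δx ≠ 0) :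
    (1/Δx) * (∫ x in (xi - 3/2 * Δx)..(xi - 1/2 * Δx), (pc xi Δx⁻¹ c0 c1 c2 c3 c4 c5).eval x)
    = (1)*c0 + (-1)*c1 + ((13/12))*c2 + ((-5/4))*c3 + ((121/80))*c4 + ((-91/48))*c5 := by
  rw [show xi - 3/2 * Δx = xi + (-(3/2))*Δx by ring, show xi - 1/2 * Δx = xi + (-(1/2))*Δx by ring,
      momU xi Δx _ _ _ _ _ _ _ _ h]
  field_simp
  ring

lemma mo2 (xi Δx c0 c1 c2 c3 c4 c5 : ℝ) (h : Δx ≠ 0) :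
    (1/Δx) * (∫ x in (xi - 1/2 * Δx)..(xi + 1/2 * Δx), (pc xi Δx⁻¹ c0 c1 c2 c3 c4 c5).eval x)
    = (1)*c0 + ((1/12))*c2 + ((1/80))*c4 := by
  rw [show xi - 1/2 * Δx = xi + (-(1/2))*Δx by ring, show xi + 1/2 * Δx = xi + (1/2)*Δx by ring,
      momU xi Δx _ _ _ _ _ _ _ _ h]
  field_simp
  ring

lemma mo3 (xi Δx c0 c1 c2 c3 c4 c5 : ℝ) (h : Δx ≠ 0) :
    (1/Δx) * (∫ x in (xi + 1/2 * Δx)..(xi + 3/2 * Δx), (pc xi Δx⁻¹ c0 c1 c2 c3 c4 c5).eval x)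
    = (1)*c0 + (1)*c1 + ((13/12))*c2 + ((5/4))*c3 + ((121/80))*c4 + ((91/48))*c5 := by
  rw [show xi + 1/2 * Δx = xi + (1/2)*Δx by ring, show xi + 3/2 * Δx = xi + (3/2)*Δx by ring,
      momU xi Δx _ _ _ _ _ _ _ _ h]
  field_simp
  ring

lemma mo4 (xi Δx c0 c1 c2 c3 c4 c5 : ℝ) (h : Δx ≠ 0) :
    (1/Δx) * (∫ x in (xi - 3/2 * Δx)..(xi - 1/2 * Δx),
      (pc xi Δx⁻¹ c0 c1 c2 c3 c4 c5).eval x * ((x - (xi - Δx))/Δx))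
    = ((1/12))*c1 + ((-1/6))*c2 + ((21/80))*c3 + ((-23/60))*c4 + ((731/1344))*c5 := by
  have h1 : (∫ x in (xi - 3/2 * Δx)..(xi - 1/2 * Δx),
        (pc xi Δx⁻¹ c0 c1 c2 c3 c4 c5).eval x * ((x - (xi - Δx))/Δx))
      = ∫ x in (xi + (-(3/2))*Δx)..(xi + (-(1/2))*Δx),
        (pc xi Δx⁻¹ c0 c1 c2 c3 c4 c5).eval x * ((x - (xi + (-1)*Δx))/Δx) := by
    rw [show xi - 3/2 * Δx = xi + (-(3/2))*Δx by ring, show xi - 1/2 * Δx = xi + (-(1/2))*Δx by ring]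
    exact integral_congr fun x _ => by ring
  rw [h1, momW xi Δx _ _ _ _ _ _ _ _ _ h]
  field_simp
  ring

lemma mo5 (xi Δx c0 c1 c2 c3 c4 c5 : ℝ) (h : Δx ≠ 0) :
    (1/Δx) * (∫ x in (xi - 1/2 * Δx)..(xi + 1/2 * Δx),
      (pc xi Δx⁻¹ c0 c1 c2 c3 c4 c5).eval x * ((x - xi)/Δx))
    = ((1/12))*c1 + ((1/80))*c3 + ((1/448))*c5 := by
  have h1 : (∫ x in (xi - 1/2 * Δx)..(xi + 1/2 * Δx),
        (pc xi Δx⁻¹ c0 c1 c2 c3 c4 c5).eval x * ((x - xi)/Δx))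
      = ∫ x in (xi + (-(1/2))*Δx)..(xi + (1/2)*Δx),
        (pc xi Δx⁻¹ c0 c1 c2 c3 c4 c5).eval x * ((x - (xi + 0*Δx))/Δx) := by
    rw [show xi - 1/2 * Δx = xi + (-(1/2))*Δx by ring, show xi + 1/2 * Δx = xi + (1/2)*Δx by ring]
    exact integral_congr fun x _ => by ring
  rw [h1, momW xi Δx _ _ _ _ _ _ _ _ _ h]
  field_simp
  ring

lemma mo6 (xi Δx c0 c1 c2 c3 c4 c5 : ℝ) (h : Δx ≠ 0) :
    (1/Δx) * (∫ x in (xi + 1/2 * Δx)..(xi + 3/2 * Δx),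
      (pc xi Δx⁻¹ c0 c1 c2 c3 c4 c5).eval x * ((x - (xi + Δx))/Δx))
    = ((1/12))*c1 + ((1/6))*c2 + ((21/80))*c3 + ((23/60))*c4 + ((731/1344))*c5 := by
  have h1 : (∫ x in (xi + 1/2 * Δx)..(xi + 3/2 * Δx),
        (pc xi Δx⁻¹ c0 c1 c2 c3 c4 c5).eval x * ((x - (xi + Δx))/Δx))
      = ∫ x in (xi + (1/2)*Δx)..(xi + (3/2)*Δx),
        (pc xi Δx⁻¹ c0 c1 c2 c3 c4 c5).eval x * ((x - (xi + 1*Δx))/Δx) := by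
    rw [show xi + 1/2 * Δx = xi + (1/2)*Δx by ring, show xi + 3/2 * Δx = xi + (3/2)*Δx by ring]
    exact integral_congr fun x _ => by ring
  rw [h1, momW xi Δx _ _ _ _ _ _ _ _ _ h]
  field_simp
  ring

theorem stmt_19 (Δx xi ubarm1 ubar0 ubarp1 vbarm1 vbar0 vbarp1 : ℝ) (hΔx : 0 < Δx) :
    ∃! p : Polynomial ℝ, p.degree ≤ 5
      ∧ (1/Δx) * (∫ x in (xi - 3/2 * Δx)..(xi - 1/2 * Δx), p.eval x) = ubarm1
      ∧ (1/Δx) * (∫ x in (xi - 1/2 * Δx)..(xi + 1/2 * Δx), p.eval x) = ubar0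
      ∧ (1/Δx) * (∫ x in (xi + 1/2 * Δx)..(xi + 3/2 * Δx), p.eval x) = ubarp1
      ∧ (1/Δx) * (∫ x in (xi - 3/2 * Δx)..(xi - 1/2 * Δx),
          p.eval x * ((x - (xi - Δx))/Δx)) = vbarm1
      ∧ (1/Δx) * (∫ x in (xi - 1/2 * Δx)..(xi + 1/2 * Δx),
          p.eval x * ((x - xi)/Δx)) = vbar0
      ∧ (1/Δx) * (∫ x in (xi + 1/2 * Δx)..(xi + 3/2 * Δx),
          p.eval x * ((x - (xi + Δx))/Δx)) = vbarp1 := by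
  have hne : Δx ≠ 0 := ne_of_gt hΔx
  set C0 := ((-43/384))*ubarm1 + ((235/192))*ubar0 + ((-43/384))*ubarp1 + ((-27/64))*vbarm1 + ((27/64))*vbarp1 with hC0
  set C1 := ((167/576))*ubarm1 + ((-167/576))*ubarp1 + ((281/288))*vbarm1 + ((2449/144))*vbar0 + ((281/288))*vbarp1 with hC1
  set C2 := ((23/16))*ubarm1 + ((-23/8))*ubar0 + ((23/16))*ubarp1 + ((45/8))*vbarm1 + ((-45/8))*vbarp1 with hC2
  set C3 := ((-455/216))*ubarm1 + ((455/216))*ubarp1 + ((-785/108))*vbarm1 + ((-1945/54))*vbar0 + ((-785/108))*vbarp1 with hC3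
  set C4 := ((-5/8))*ubarm1 + ((5/4))*ubar0 + ((-5/8))*ubarp1 + ((-15/4))*vbarm1 + ((15/4))*vbarp1 with hC4
  set C5 := ((35/36))*ubarm1 + ((-35/36))*ubarp1 + ((77/18))*vbarm1 + ((133/9))*vbar0 + ((77/18))*vbarp1 with hC5
  refine ⟨pc xi Δx⁻¹ C0 C1 C2 C3 C4 C5, ⟨pc_degree xi Δx⁻¹ C0 C1 C2 C3 C4 C5, ?_, ?_, ?_, ?_, ?_, ?_⟩, ?_⟩
  · rw [mo1 xi Δx C0 C1 C2 C3 C4 C5 hne]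
    simp only [hC0, hC1, hC2, hC3, hC4, hC5]
    ring
  · rw [mo2 xi Δx C0 C1 C2 C3 C4 C5 hne]
    simp only [hC0, hC1, hC2, hC3, hC4, hC5]
    ring
  · rw [mo3 xi Δx C0 C1 C2 C3 C4 C5 hne]
    simp only [hC0, hC1, hC2, hC3, hC4, hC5]
    ring
  · rw [mo4 xi Δx C0 C1 C2 C3 C4 C5 hne]
    simp only [hC0, hC1, hC2, hC3, hC4, hC5]
    ring
  · rw [mo5 xi Δx C0 C1 C2 C3 C4 C5 hne]
    simp only [hC0, hC1, hC2, hC3, hC4, hC5]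
    ring
  · rw [mo6 xi Δx C0 C1 C2 C3 C4 C5 hne]
    simp only [hC0, hC1, hC2, hC3, hC4, hC5]
    ring
  · rintro q ⟨hdq, e1, e2, e3, e4, e5, e6⟩
    obtain ⟨b0, b1, b2, b3, b4, b5, rfl⟩ := rep xi Δx hne q hdq
    rw [mo1 xi Δx b0 b1 b2 b3 b4 b5 hne] at e1
    rw [mo2 xi Δx b0 b1 b2 b3 b4 b5 hne] at e2
    rw [mo3 xi Δx b0 b1 b2 b3 b4 b5 hne] at e3
    rw [mo4 xi Δx b0 b1 b2 b3 b4 b5 hne] at e4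
    rw [mo5 xi Δx b0 b1 b2 b3 b4 b5 hne] at e5
    rw [mo6 xi Δx b0 b1 b2 b3 b4 b5 hne] at e6
    have hb0 : b0 = C0 := by rw [hC0]; linear_combination ((-43/384))*e1 + ((235/192))*e2 + ((-43/384))*e3 + ((-27/64))*e4 + ((27/64))*e6
    have hb1 : b1 = C1 := by rw [hC1]; linear_combination ((167/576))*e1 + ((-167/576))*e3 + ((281/288))*e4 + ((2449/144))*e5 + ((281/288))*e6
    have hb2 : b2 = C2 := by rw [hC2]; linear_combination ((23/16))*e1 + ((-23/8))*e2 + ((23/16))*e3 + ((45/8))*e4 + ((-45/8))*e6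
    have hb3 : b3 = C3 := by rw [hC3]; linear_combination ((-455/216))*e1 + ((455/216))*e3 + ((-785/108))*e4 + ((-1945/54))*e5 + ((-785/108))*e6
    have hb4 : b4 = C4 := by rw [hC4]; linear_combination ((-5/8))*e1 + ((5/4))*e2 + ((-5/8))*e3 + ((-15/4))*e4 + ((15/4))*e6
    have hb5 : b5 = C5 := by rw [hC5]; linear_combination ((35/36))*e1 + ((-35/36))*e3 + ((77/18))*e4 + ((133/9))*e5 + ((77/18))*e6
    rw [hb0, hb1, hb2, hb3, hb4, hb5]
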